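/- Let n ∈ ℝ³ be a unit vector, let v ∈ ℝ³ be nonzero with v · n = 0, let a ∈ ℝ³ satisfy a · n = 0, and let g ∈ ℝ³ satisfy (D(v) g) · n = 0. Then [(E(v) ⊗ a) g] · n = 0, i.e., Σ_{i=1}^{3} n_i Σ_{j=1}^{3} (Σ_{k=1}^{3} ∂_{v_k} D_{ij}(v) a_k) g_j = 0. -/

import Mathlib

open scoped BigOperators

/-- Euclidean norm of a vector in ℝ³. -/
noncomputable def norm3 (v : Fin 3 → ℝ) : ℝ := Real.sqrt (∑ i, v i ^ 2)

/-- The 3D Bear–Scheidegger diffusion–dispersion tensor. -/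
noncomputable def bsD (φ dm dt dl : ℝ) (v : Fin 3 → ℝ) (i j : Fin 3) : ℝ :=
  (φ * dm + dt * norm3 v) * (if i = j then (1 : ℝ) else 0) + (dl - dt) * v i * v j / norm3 v

/-- The partial derivative `∂_{v_k} D_{ij}(v)`. -/
noncomputable def pD (φ dm dt dl : ℝ) (v : Fin 3 → ℝ) (i j k : Fin 3) : ℝ :=
  fderiv ℝ (fun u => bsD φ dm dt dl u i j) v (Pi.single k 1)

lemma norm3_nonneg (v : Fin 3 → ℝ) : 0 ≤ norm3 v := Real.sqrt_nonneg _

lemma norm3_pos {v : Fin 3 → ℝ} (hv : v ≠ 0) : 0 < norm3 v := by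
  apply Real.sqrt_pos.2
  have : ∃ i, v i ≠ 0 := by
    by_contra h; push_neg at h; exact hv (funext h)
  obtain ⟨i, hi⟩ := this
  have : 0 < v i ^ 2 := by positivity
  have h2 : ∀ j ∈ Finset.univ, 0 ≤ v j ^ 2 := fun j _ => sq_nonneg _
  calc 0 < v i ^ 2 := this
    _ ≤ ∑ j, v j ^ 2 := Finset.single_le_sum h2 (Finset.mem_univ i)

lemma norm3_sq (v : Fin 3 → ℝ) : norm3 v ^ 2 = ∑ i, v i ^ 2 :=
  Real.sq_sqrt (by positivity)

lemma hasFDerivAt_norm3 {v : Fin 3 → ℝ} (hv : v ≠ 0) :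
    HasFDerivAt norm3 ((norm3 v)⁻¹ • ∑ i : Fin 3, v i •
      (ContinuousLinearMap.proj i : (Fin 3 → ℝ) →L[ℝ] ℝ)) v := by
  have hS : HasFDerivAt (fun u : Fin 3 → ℝ => ∑ i, u i ^ 2)
      (∑ i : Fin 3, (2 * v i) • (ContinuousLinearMap.proj i : (Fin 3 → ℝ) →L[ℝ] ℝ)) v := by
    apply HasFDerivAt.fun_sum
    intro i _
    have h := ((ContinuousLinearMap.proj i : (Fin 3 → ℝ) →L[ℝ] ℝ).hasFDerivAt (x := v)).mul
      ((ContinuousLinearMap.proj i : (Fin 3 → ℝ) →L[ℝ] ℝ).hasFDerivAt (x := v))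
    simp only [ContinuousLinearMap.proj_apply] at h
    rw [show (fun u : Fin 3 → ℝ => u i ^ 2) = ⇑(ContinuousLinearMap.proj i : (Fin 3 → ℝ) →L[ℝ] ℝ) * ⇑(ContinuousLinearMap.proj i : (Fin 3 → ℝ) →L[ℝ] ℝ) by funext u; simp [pow_two]]
    exact h.congr_fderiv (by rw [two_mul, add_smul])
  have hpos : (0:ℝ) < ∑ i, v i ^ 2 := by
    have := norm3_pos hv
    rw [← norm3_sq]; positivity
  have hsqrt := (Real.hasDerivAt_sqrt (ne_of_gt hpos)).comp_hasFDerivAt v hS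
  refine (show HasFDerivAt norm3 _ v from hsqrt).congr_fderiv ?_
  ext w
  have hN : norm3 v ≠ 0 := ne_of_gt (norm3_pos hv)
  simp [norm3, ContinuousLinearMap.smul_apply, ContinuousLinearMap.sum_apply,
    Finset.mul_sum, smul_eq_mul]
  ring_nf

lemma pD_eq (φ dm dt dl : ℝ) {v : Fin 3 → ℝ} (hv : v ≠ 0) (i j k : Fin 3) :
    pD φ dm dt dl v i j k =
      dt * v k / norm3 v * (if i = j then (1:ℝ) else 0)
      + (dl - dt) * (((if i = k then (1:ℝ) else 0) * v j + v i * (if j = k then (1:ℝ) else 0)) / norm3 v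
          - v i * v j * v k / norm3 v ^ 3) := by
  have hN : norm3 v ≠ 0 := ne_of_gt (norm3_pos hv)
  set L : (Fin 3 → ℝ) →L[ℝ] ℝ := (norm3 v)⁻¹ • ∑ i : Fin 3, v i •
      (ContinuousLinearMap.proj i : (Fin 3 → ℝ) →L[ℝ] ℝ) with hL
  have hNd : HasFDerivAt norm3 L v := hasFDerivAt_norm3 hv
  have hA : HasFDerivAt (fun u => (φ * dm + dt * norm3 u) * (if i = j then (1:ℝ) else 0))
      ((if i = j then (1:ℝ) else 0) • (dt • L)) v :=
    (((hNd.const_mul dt).const_add (φ * dm)).mul_const _)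
  have hB : HasFDerivAt (fun u : Fin 3 → ℝ => (dl - dt) * (u i * u j))
      ((dl - dt) • (v i • (ContinuousLinearMap.proj j : (Fin 3 → ℝ) →L[ℝ] ℝ)
        + v j • (ContinuousLinearMap.proj i : (Fin 3 → ℝ) →L[ℝ] ℝ))) v := by
    have h := ((ContinuousLinearMap.proj i : (Fin 3 → ℝ) →L[ℝ] ℝ).hasFDerivAt (x := v)).mul
      ((ContinuousLinearMap.proj j : (Fin 3 → ℝ) →L[ℝ] ℝ).hasFDerivAt (x := v))
    simpa using h.const_mul (dl - dt)
  have hC : HasFDerivAt (fun u => (norm3 u)⁻¹) ((-((norm3 v) ^ 2)⁻¹) • L) v :=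
    (hasDerivAt_inv hN).comp_hasFDerivAt v hNd
  have hBC := hB.fun_mul hC
  have h := hA.fun_add hBC
  have heq : (fun u => bsD φ dm dt dl u i j)
      = fun u => (φ * dm + dt * norm3 u) * (if i = j then (1:ℝ) else 0)
        + ((dl - dt) * (u i * u j)) * (norm3 u)⁻¹ := by
    funext u; simp only [bsD, div_eq_mul_inv]; ring
  rw [pD, heq, h.fderiv]
  have hLval : L (Pi.single k 1) = (norm3 v)⁻¹ * v k := by
    rw [hL]
    simp only [ContinuousLinearMap.smul_apply, ContinuousLinearMap.sum_apply,
      ContinuousLinearMap.proj_apply, smul_eq_mul, Pi.single_apply]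
    rw [Finset.mul_sum]
    rw [Finset.sum_eq_single k (by intro b _ hb; simp [hb]) (by simp)]
    simp
  simp only [ContinuousLinearMap.add_apply, ContinuousLinearMap.smul_apply, smul_eq_mul,
    ContinuousLinearMap.proj_apply, hLval, Pi.single_apply]
  field_simp
  ring_nf

set_option maxHeartbeats 1000000 in
theorem stmt13 (φ dm dt dl : ℝ) (hφ : 0 < φ) (hdm : 0 < dm) (hdt : 0 < dt) (hdl : 0 < dl)
    (n v a g : Fin 3 → ℝ) (hn : ∑ i, n i ^ 2 = 1) (hv : v ≠ 0)
    (hvn : ∑ i, v i * n i = 0) (han : ∑ i, a i * n i = 0)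
    (hg : ∑ i, (∑ j, bsD φ dm dt dl v i j * g j) * n i = 0) :
    ∑ i, n i * ∑ j, (∑ k, pD φ dm dt dl v i j k * a k) * g j = 0 := by
  have hN0 : (0:ℝ) < norm3 v := norm3_pos hv
  have hN : norm3 v ≠ 0 := ne_of_gt hN0
  -- step 1: g · n = 0
  have hexp : (∑ i, (∑ j, bsD φ dm dt dl v i j * g j) * n i)
      = (φ * dm + dt * norm3 v) * (∑ i, g i * n i)
        + (dl - dt) * (∑ i, v i * g i) * (∑ i, v i * n i) / norm3 v := by
    simp only [bsD, Fin.sum_univ_three]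
    simp only [Fin.reduceEq, reduceIte]
    field_simp
    ring
  rw [hexp, hvn] at hg
  have hgn : (∑ i, g i * n i) = 0 := by
    have hpos : (0:ℝ) < φ * dm + dt * norm3 v := by positivity
    have := hg
    rw [mul_zero, zero_div, add_zero] at this
    exact (mul_eq_zero.1 this).resolve_left (ne_of_gt hpos)
  -- step 2: expand the goal
  have hexp2 : (∑ i, n i * ∑ j, (∑ k, pD φ dm dt dl v i j k * a k) * g j)
      = (dt * (∑ i, v i * a i) / norm3 v) * (∑ i, g i * n i)
        + ((dl - dt) / norm3 v) * (∑ i, a i * n i) * (∑ i, v i * g i)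
        + ((dl - dt) / norm3 v) * (∑ i, v i * n i) * (∑ i, a i * g i)
        - ((dl - dt) / norm3 v ^ 3) * (∑ i, v i * n i) * (∑ i, v i * g i) * (∑ i, v i * a i) := by
    simp only [Fin.sum_univ_three]
    simp only [pD_eq φ dm dt dl hv]
    simp only [Fin.reduceEq, reduceIte]
    field_simp
    ring
  rw [hexp2, hgn, hvn, han]
  ring
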